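/- In the DLSR setup with stepsize μ > 0 and decay factor β > 0 satisfying μβ ≤ 1, and true signal f_* : ℤ → E with f_*^{(k)} ∈ W for all k and |f_*^{(k+1)}(u) − f_*^{(k)}(u)| ≤ Δ for all u and k, the out-of-band error satisfies for every k ∈ ℤ: e_+^{(k+1)} ≤ (1 − μβ)·e_+^{(k)} + μ·η^{(k)} + (√N + μ·|S|·τ̄)·Δ. -/

import Mathlib

open scoped RealInnerProductSpace BigOperators

private lemma esum_apply {N : ℕ} {α : Type*} [DecidableEq α] (s : Finset α)
    (F : α → EuclideanSpace ℝ (Fin N)) (w : Fin N) :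
    (∑ v ∈ s, F v) w = ∑ v ∈ s, F v w := by
  induction s using Finset.induction with
  | empty => rfl
  | insert _ _ h ih => rw [Finset.sum_insert h, Finset.sum_insert h, ← ih]; rfl

private lemma esingle_sum_apply {N : ℕ} (g : Fin N → ℝ) (w : Fin N) :
    (∑ v : Fin N, EuclideanSpace.single v (g v)) w = g w := by
  rw [esum_apply]
  simp [EuclideanSpace.single_apply]

private lemma enorm_mono {N : ℕ} (x y : EuclideanSpace ℝ (Fin N))
    (h : ∀ i, |x i| ≤ |y i|) : ‖x‖ ≤ ‖y‖ := by
  rw [EuclideanSpace.norm_eq, EuclideanSpace.norm_eq]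
  apply Real.sqrt_le_sqrt
  apply Finset.sum_le_sum
  intro i _
  simpa [sq_abs] using
    sq_le_sq' (by linarith [abs_nonneg (x i), neg_abs_le (x i), h i])
      (le_trans (le_abs_self _) (h i))

private lemma eQ_norm_le {N : ℕ} (W : Submodule ℝ (EuclideanSpace ℝ (Fin N)))
    (x : EuclideanSpace ℝ (Fin N)) :
    ‖x - (W.orthogonalProjectionOnto x : EuclideanSpace ℝ (Fin N))‖ ≤ ‖x‖ := by
  rw [show x - (W.orthogonalProjectionOnto x : EuclideanSpace ℝ (Fin N)) =
      (Wᗮ.orthogonalProjectionOnto x : EuclideanSpace ℝ (Fin N)) from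
      (W.starProjection_orthogonal_val x).symm]
  calc ‖(Wᗮ.orthogonalProjectionOnto x : EuclideanSpace ℝ (Fin N))‖
      = ‖Wᗮ.orthogonalProjectionOnto x‖ := rfl
    _ ≤ ‖Wᗮ.orthogonalProjectionOnto‖ * ‖x‖ := (Wᗮ.orthogonalProjectionOnto).le_opNorm x
    _ ≤ 1 * ‖x‖ := by
        gcongr ?_ * ‖x‖
        exact Submodule.orthogonalProjectionOnto_norm_le _
    _ = ‖x‖ := one_mul _

/-- In the DLSR setup with `μβ ≤ 1`, the out-of-band error satisfies
`e_+^{(k+1)} ≤ (1 − μβ)e_+^{(k)} + μη^{(k)} + (√N + μ|S|τ̄)Δ`. -/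
theorem DLSR_out_of_band_error_recursion
    {N : ℕ} (W : Submodule ℝ (EuclideanSpace ℝ (Fin N)))
    (S : Finset (Fin N)) (τ : Fin N → Fin N → ℕ) (τbar : ℕ)
    (hτ : ∀ u ∈ S, ∀ v : Fin N, 1 ≤ τ u v ∧ τ u v ≤ τbar)
    (T : EuclideanSpace ℝ (Fin N) →L[ℝ] EuclideanSpace ℝ (Fin N))
    (hT : ∀ g : EuclideanSpace ℝ (Fin N), T g =
      ∑ u ∈ S, g u • (W.orthogonalProjectionOnto (EuclideanSpace.single u (1 : ℝ)) :
        EuclideanSpace ℝ (Fin N)))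
    (hTW : ∀ g ∈ W, T g ∈ W)
    (hTsa : ∀ g ∈ W, ∀ h ∈ W, ⟪T g, h⟫ = ⟪g, T h⟫)
    (hTbnd : ∀ g ∈ W, 0 ≤ ⟪T g, g⟫ ∧ ⟪T g, g⟫ ≤ ‖g‖ ^ 2)
    (μ β Δ : ℝ) (hμ : 0 < μ) (hβ : 0 < β) (hμβ : μ * β ≤ 1)
    (fstar : ℤ → EuclideanSpace ℝ (Fin N)) (hfstarW : ∀ k : ℤ, fstar k ∈ W)
    (hΔ : ∀ (k : ℤ) (u : Fin N), |fstar (k + 1) u - fstar k u| ≤ Δ)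
    (f : ℤ → EuclideanSpace ℝ (Fin N))
    (hiter : ∀ (k : ℤ) (v : Fin N), f (k + 1) v =
      (1 - μ * β) * f k v +
      μ * ∑ u ∈ S, (fstar (k - τ u v) u - f (k - τ u v) u) *
        (W.orthogonalProjectionOnto (EuclideanSpace.single u (1 : ℝ)) :
          EuclideanSpace ℝ (Fin N)) v)
    (ftil : ℤ → EuclideanSpace ℝ (Fin N))
    (hftil : ∀ k : ℤ, ftil k ∈ W ∧ β • ftil k + T (ftil k) = T (fstar k))
    (ep η : ℤ → ℝ)
    (hep : ∀ k : ℤ, ep k =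
      ‖f k - (W.orthogonalProjectionOnto (f k) : EuclideanSpace ℝ (Fin N))‖)
    (hη : ∀ k : ℤ, η k = ‖∑ u ∈ S, ∑ v : Fin N, EuclideanSpace.single v
      ((f k u - f (k - τ u v) u) *
        (W.orthogonalProjectionOnto (EuclideanSpace.single u (1 : ℝ)) :
          EuclideanSpace ℝ (Fin N)) v)‖) :
    ∀ k : ℤ, ep (k + 1) ≤ (1 - μ * β) * ep k + μ * η k +
      (Real.sqrt (N : ℝ) + μ * S.card * τbar) * Δ := by
  classical
  intro k
  have h1μβ : 0 ≤ 1 - μ * β := by linarith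
  by_cases hN : N = 0
  · subst hN
    have hS : S = ∅ := Finset.eq_empty_of_forall_notMem (fun u _ => u.elim0)
    have hzero : ∀ x : EuclideanSpace ℝ (Fin 0), ‖x‖ = 0 := by
      intro x; rw [EuclideanSpace.norm_eq]; simp
    have hep0 : ∀ m : ℤ, ep m = 0 := fun m => by rw [hep m]; exact hzero _
    have hη0 : η k = 0 := by rw [hη k]; exact hzero _
    rw [hep0, hep0, hη0, hS]
    simp
  -- main case
  have huN : Nonempty (Fin N) := ⟨⟨0, Nat.pos_of_ne_zero hN⟩⟩
  have hΔ0 : 0 ≤ Δ := le_trans (abs_nonneg _) (hΔ 0 huN.some)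
  set d : Fin N → EuclideanSpace ℝ (Fin N) :=
    fun u => (W.orthogonalProjectionOnto (EuclideanSpace.single u (1 : ℝ)) :
      EuclideanSpace ℝ (Fin N)) with hd
  have hdnorm : ∀ u, ‖d u‖ ≤ 1 := by
    intro u
    calc ‖d u‖ = ‖W.orthogonalProjectionOnto (EuclideanSpace.single u (1 : ℝ))‖ := rfl
      _ ≤ ‖W.orthogonalProjectionOnto‖ * ‖EuclideanSpace.single u (1 : ℝ)‖ :=
          W.orthogonalProjectionOnto.le_opNorm _
      _ ≤ 1 * 1 := by
          apply mul_le_mul (Submodule.orthogonalProjectionOnto_norm_le _) (le_of_eq ?_) (norm_nonneg _)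
            zero_le_one
          simp [EuclideanSpace.norm_single]
      _ = 1 := one_mul _
  -- telescoping bound for fstar
  have htel : ∀ (m : ℕ) (j : ℤ) (u : Fin N), |fstar j u - fstar (j - m) u| ≤ m * Δ := by
    intro m
    induction m with
    | zero => intro j u; simp
    | succ n ih =>
      intro j u
      have h1 : |fstar j u - fstar (j - n) u| ≤ n * Δ := ih j u
      have h2 : |fstar (j - n) u - fstar (j - (n + 1 : ℕ)) u| ≤ Δ := by
        have h3 := hΔ (j - (n + 1 : ℕ)) u
        have he : j - (n + 1 : ℕ) + 1 = j - n := by push_cast; ring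
        rwa [he] at h3
      calc |fstar j u - fstar (j - (n + 1 : ℕ)) u|
          = |(fstar j u - fstar (j - n) u) + (fstar (j - n) u - fstar (j - (n + 1 : ℕ)) u)| := by
            ring_nf
        _ ≤ |fstar j u - fstar (j - n) u| + |fstar (j - n) u - fstar (j - (n + 1 : ℕ)) u| :=
            abs_add_le _ _
        _ ≤ n * Δ + Δ := add_le_add h1 h2
        _ = (n + 1 : ℕ) * Δ := by push_cast; ring
  -- bound on coefficients
  have hc : ∀ u ∈ S, ∀ v : Fin N, |fstar (k - τ u v) u - fstar k u| ≤ (τbar : ℝ) * Δ := by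
    intro u hu v
    rw [abs_sub_comm]
    calc |fstar k u - fstar (k - τ u v) u| ≤ (τ u v : ℝ) * Δ := htel (τ u v) k u
      _ ≤ (τbar : ℝ) * Δ := by
          apply mul_le_mul_of_nonneg_right _ hΔ0
          exact_mod_cast (hτ u hu v).2
  -- the three pieces
  set A : EuclideanSpace ℝ (Fin N) := ∑ u ∈ S, ∑ v : Fin N, EuclideanSpace.single v
      ((fstar (k - τ u v) u - fstar k u) * d u v) with hA
  set B : EuclideanSpace ℝ (Fin N) := ∑ u ∈ S, ∑ v : Fin N, EuclideanSpace.single v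
      ((f k u - f (k - τ u v) u) * d u v) with hB
  set C : EuclideanSpace ℝ (Fin N) := ∑ u ∈ S, (fstar k u - f k u) • d u with hC
  have hCW : C ∈ W := by
    apply Submodule.sum_mem
    intro u _
    exact Submodule.smul_mem _ _ (W.orthogonalProjectionOnto (EuclideanSpace.single u 1)).2
  -- key identity
  have hkey : f (k + 1) = (1 - μ * β) • f k + μ • (C + A + B) := by
    ext v
    have hAv : A v = ∑ u ∈ S, (fstar (k - τ u v) u - fstar k u) * d u v := by
      rw [hA, esum_apply]
      exact Finset.sum_congr rfl fun u _ => esingle_sum_apply _ v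
    have hBv : B v = ∑ u ∈ S, (f k u - f (k - τ u v) u) * d u v := by
      rw [hB, esum_apply]
      exact Finset.sum_congr rfl fun u _ => esingle_sum_apply _ v
    have hCv : C v = ∑ u ∈ S, (fstar k u - f k u) * d u v := by
      rw [hC, esum_apply]; rfl
    have hsum : C v + A v + B v
        = ∑ u ∈ S, (fstar (k - τ u v) u - f (k - τ u v) u) * d u v := by
      rw [hAv, hBv, hCv, ← Finset.sum_add_distrib, ← Finset.sum_add_distrib]
      exact Finset.sum_congr rfl fun u _ => by ring
    have hres : f (k + 1) v = (1 - μ * β) * f k v + μ * (C v + A v + B v) := by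
      rw [hsum]; exact hiter k v
    rw [hres]
    rfl
  -- projection operator
  set P : EuclideanSpace ℝ (Fin N) →L[ℝ] EuclideanSpace ℝ (Fin N) :=
    W.subtypeL.comp W.orthogonalProjectionOnto with hP
  have hPx : ∀ x : EuclideanSpace ℝ (Fin N), P x = (W.orthogonalProjectionOnto x :
      EuclideanSpace ℝ (Fin N)) := fun x => rfl
  have hPC : P C = C := by
    rw [hPx]
    exact congrArg _ (Submodule.orthogonalProjectionOnto_mem_subspace_eq_self (⟨C, hCW⟩ : W))
  have hsplit : f (k + 1) - P (f (k + 1))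
      = (1 - μ * β) • (f k - P (f k)) + μ • ((A - P A) + (B - P B)) := by
    rw [hkey, map_add, map_smul, map_smul, map_add, map_add, hPC]
    module
  have hQA : ‖A - P A‖ ≤ ‖A‖ := by rw [hPx]; exact eQ_norm_le W A
  have hQB : ‖B - P B‖ ≤ ‖B‖ := by rw [hPx]; exact eQ_norm_le W B
  -- bound ‖A‖
  have hAu : ∀ u ∈ S, ‖(∑ v : Fin N, EuclideanSpace.single v
      ((fstar (k - τ u v) u - fstar k u) * d u v))‖ ≤ (τbar : ℝ) * Δ := by
    intro u hu
    have step1 : ‖(∑ v : Fin N, EuclideanSpace.single v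
        ((fstar (k - τ u v) u - fstar k u) * d u v))‖ ≤ ‖((τbar : ℝ) * Δ) • d u‖ := by
      apply enorm_mono
      intro i
      rw [esingle_sum_apply]
      have hsma : (((τbar : ℝ) * Δ) • d u) i = ((τbar : ℝ) * Δ) * d u i := rfl
      rw [hsma, abs_mul, abs_mul]
      apply mul_le_mul_of_nonneg_right _ (abs_nonneg _)
      exact le_trans (hc u hu i) (le_abs_self _)
    refine le_trans step1 ?_
    rw [norm_smul, Real.norm_eq_abs, abs_of_nonneg (by positivity)]
    calc ((τbar : ℝ) * Δ) * ‖d u‖ ≤ ((τbar : ℝ) * Δ) * 1 :=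
        mul_le_mul_of_nonneg_left (hdnorm u) (by positivity)
      _ = (τbar : ℝ) * Δ := mul_one _
  have hAbound : ‖A‖ ≤ (S.card : ℝ) * ((τbar : ℝ) * Δ) := by
    rw [hA]
    refine le_trans (norm_sum_le _ _) ?_
    calc (∑ u ∈ S, ‖(∑ v : Fin N, EuclideanSpace.single v
          ((fstar (k - τ u v) u - fstar k u) * d u v))‖)
        ≤ ∑ u ∈ S, (τbar : ℝ) * Δ := Finset.sum_le_sum hAu
      _ = (S.card : ℝ) * ((τbar : ℝ) * Δ) := by rw [Finset.sum_const, nsmul_eq_mul]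
  -- assemble
  have hBnorm : ‖B‖ = η k := (hη k).symm
  have main : ep (k + 1) ≤ (1 - μ * β) * ep k + μ * (‖A‖ + ‖B‖) := by
    rw [hep (k + 1), hep k, ← hPx, ← hPx, hsplit]
    calc ‖(1 - μ * β) • (f k - P (f k)) + μ • ((A - P A) + (B - P B))‖
        ≤ ‖(1 - μ * β) • (f k - P (f k))‖ + ‖μ • ((A - P A) + (B - P B))‖ := norm_add_le _ _
      _ = (1 - μ * β) * ‖f k - P (f k)‖ + μ * ‖(A - P A) + (B - P B)‖ := by
          rw [norm_smul, norm_smul, Real.norm_eq_abs, Real.norm_eq_abs,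
            abs_of_nonneg h1μβ, abs_of_nonneg hμ.le]
      _ ≤ (1 - μ * β) * ‖f k - P (f k)‖ + μ * (‖A‖ + ‖B‖) := by
          apply add_le_add_right
          apply mul_le_mul_of_nonneg_left _ hμ.le
          exact le_trans (norm_add_le _ _) (add_le_add hQA hQB)
  have hsqrt : 0 ≤ Real.sqrt (N : ℝ) * Δ := by positivity
  calc ep (k + 1) ≤ (1 - μ * β) * ep k + μ * (‖A‖ + ‖B‖) := main
    _ ≤ (1 - μ * β) * ep k + μ * ((S.card : ℝ) * ((τbar : ℝ) * Δ) + η k) := by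
        apply add_le_add_right
        apply mul_le_mul_of_nonneg_left _ hμ.le
        rw [hBnorm]
        exact add_le_add_left hAbound _
    _ ≤ (1 - μ * β) * ep k + μ * η k + (Real.sqrt (N : ℝ) + μ * S.card * τbar) * Δ := by
        nlinarith [hsqrt]
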